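/- Under the model of Lemma 4.1: let α ∈ ℝ^N with null set H₀ = {i : α_i ≤ 0} of size N₀, let u, u⁽¹⁾, …, u⁽ⱽ⁾ be i.i.d. from a distribution 𝒰 on ℝ^N, and let α̂⁽ᵛ⁾ = (α + u) − u⁽ᵛ⁾. Then with probability at least 1 − 2/(V+1) there exists v ∈ [V] such that |{i : α̂⁽ᵛ⁾_i ≤ 0}| ≥ N₀/2. -/

import Mathlib

open MeasureTheory ProbabilityTheory Finset
open scoped ENNReal

namespace ExistsSampleAux

variable {N : ℕ}

/-- count of null coordinates where `y i ≤ x i` -/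
noncomputable def mc (α : Fin N → ℝ) (x y : Fin N → ℝ) : ℕ :=
  ((univ : Finset (Fin N)).filter fun i => α i ≤ 0 ∧ y i ≤ x i).card

lemma mc_total (α : Fin N → ℝ) (x y : Fin N → ℝ) :
    ((univ : Finset (Fin N)).filter fun i => α i ≤ 0).card ≤ mc α x y + mc α y x := by
  classical
  refine le_trans (card_le_card ?_) (card_union_le _ _)
  intro i hi
  simp only [mem_filter, mem_union, mem_univ, true_and] at hi ⊢
  rcases le_total (y i) (x i) with h | h
  · exact Or.inl ⟨hi, h⟩
  · exact Or.inr ⟨hi, h⟩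

lemma measurable_mc {V : ℕ} (α : Fin N → ℝ) (k j : Fin (V + 1)) :
    Measurable fun x : Fin (V + 1) → Fin N → ℝ => mc α (x k) (x j) := by
  classical
  unfold mc
  simp_rw [card_filter]
  refine Finset.measurable_sum _ fun i _ => ?_
  refine Measurable.ite ?_ measurable_const measurable_const
  have hm1 : Measurable fun x : Fin (V + 1) → Fin N → ℝ => x j i :=
    (measurable_pi_apply i).comp (measurable_pi_apply j)
  have hm2 : Measurable fun x : Fin (V + 1) → Fin N → ℝ => x k i :=
    (measurable_pi_apply i).comp (measurable_pi_apply k)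
  exact (MeasurableSet.const _).inter (measurableSet_le hm1 hm2)

end ExistsSampleAux

open ExistsSampleAux

theorem exists_sample_with_many_nulls (N V : ℕ)
    {Ω : Type*} [MeasurableSpace Ω] (μ : Measure Ω) [IsProbabilityMeasure μ]
    (α : Fin N → ℝ)
    (X : Fin (V + 1) → Ω → Fin N → ℝ)
    (hindep : iIndepFun X μ)
    (hident : ∀ a b, IdentDistrib (X a) (X b) μ μ) :
    ENNReal.ofReal (1 - 2 / (V + 1)) ≤
      μ {ω | ∃ v : Fin V,
        (((univ : Finset (Fin N)).filter fun i => α i ≤ 0).card : ℝ) / 2 ≤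
          ((univ : Finset (Fin N)).filter fun i =>
            α i + X 0 ω i - X v.succ ω i ≤ 0).card} := by
  classical
  rcases lt_or_ge (1 - 2 / (V + 1 : ℝ)) 0 with hneg | hpos
  · rw [ENNReal.ofReal_eq_zero.mpr hneg.le]; exact zero_le
  set N₀ : ℕ := ((univ : Finset (Fin N)).filter fun i => α i ≤ 0).card with hN₀
  -- the bad sets in the product space
  set S : Fin (V + 1) → Set (Fin (V + 1) → Fin N → ℝ) :=
    fun j => {x | ∀ k, k ≠ j → 2 * mc α (x k) (x j) < N₀} with hS
  have hSmeas : ∀ j, MeasurableSet (S j) := by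
    intro j
    have : S j = ⋂ k, ⋂ (_ : k ≠ j), {x | 2 * mc α (x k) (x j) < N₀} := by
      ext x; simp [hS]
    rw [this]
    refine MeasurableSet.iInter fun k => MeasurableSet.iInter fun _ => ?_
    have : {x : Fin (V + 1) → Fin N → ℝ | 2 * mc α (x k) (x j) < N₀}
        = (fun x : Fin (V + 1) → Fin N → ℝ => mc α (x k) (x j)) ⁻¹' {n | 2 * n < N₀} := rfl
    rw [this]
    exact (measurable_mc α k j) (MeasurableSet.of_discrete)
  -- disjointness
  have hdisj : ∀ j j' : Fin (V + 1), j ≠ j' → Disjoint (S j) (S j') := by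
    intro j j' hjj'
    rw [Set.disjoint_left]
    intro x hx hx'
    have h1 := hx j' (Ne.symm hjj')
    have h2 := hx' j hjj'
    have := mc_total α (x j) (x j')
    omega
  -- the distribution of one sample
  set ν : Measure (Fin N → ℝ) := μ.map (X 0) with hν
  have hXm : ∀ a, AEMeasurable (X a) μ := fun a => (hident a a).aemeasurable_fst
  haveI : IsProbabilityMeasure ν := Measure.isProbabilityMeasure_map (hXm 0)
  -- the joint map
  set T : Ω → Fin (V + 1) → Fin N → ℝ := fun ω i => X i ω with hT
  have hTm : AEMeasurable T μ := by
    have h : ∀ᵐ ω ∂μ, ∀ i, X i ω = (hXm i).mk (X i) ω :=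
      ae_all_iff.mpr fun i => (hXm i).ae_eq_mk
    exact ⟨fun ω i => (hXm i).mk (X i) ω,
      measurable_pi_lambda _ fun i => (hXm i).measurable_mk,
      h.mono fun ω hω => funext fun i => hω i⟩
  have hmap : μ.map T = Measure.pi fun _ => ν := by
    refine (Measure.pi_eq fun s hs => ?_).symm
    rw [Measure.map_apply_of_aemeasurable hTm (MeasurableSet.univ_pi hs)]
    have hpre : T ⁻¹' Set.pi Set.univ s = ⋂ i, X i ⁻¹' s i := by
      ext ω; simp [hT, Set.mem_pi]
    rw [hpre, hindep.meas_iInter fun i => ⟨s i, hs i, rfl⟩]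
    refine Finset.prod_congr rfl fun i _ => ?_
    rw [hν, Measure.map_apply_of_aemeasurable (hXm 0) (hs i)]
    exact (hident i 0).measure_mem_eq (hs i)
  set P : Measure (Fin (V + 1) → Fin N → ℝ) := Measure.pi fun _ => ν with hP
  haveI : IsProbabilityMeasure P := by rw [hP]; infer_instance
  -- exchangeability : all S j have the same measure
  have hexch : ∀ j, P (S j) = P (S 0) := by
    intro j
    set σ : Fin (V + 1) ≃ Fin (V + 1) := Equiv.swap j 0 with hσ
    have hmp := measurePreserving_piCongrLeft (fun _ : Fin (V + 1) => ν) σ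
    have hsymm : σ.symm = σ := Equiv.symm_swap j 0
    have h0 : σ 0 = j := Equiv.swap_apply_right j 0
    have hswap : ∀ k, σ (σ k) = k := fun k => Equiv.swap_apply_self j 0 k
    have hpre : (MeasurableEquiv.piCongrLeft (fun _ => Fin N → ℝ) σ) ⁻¹' (S 0) = S j := by
      ext x
      simp only [Set.mem_preimage, hS, Set.mem_setOf_eq,
        MeasurableEquiv.coe_piCongrLeft, Equiv.piCongrLeft_apply, eq_rec_constant, hsymm, h0]
      constructor
      · intro h k' hk'
        have hk : σ k' ≠ 0 := by
          intro hc
          have := congrArg σ hc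
          rw [hswap, h0] at this
          exact hk' this
        have := h (σ k') hk
        rwa [hswap] at this
      · intro h k hk
        refine h (σ k) ?_
        intro hc
        rw [← h0] at hc
        exact hk (σ.injective hc)
    calc P (S j) = P ((MeasurableEquiv.piCongrLeft (fun _ => Fin N → ℝ) σ) ⁻¹' (S 0)) := by
          rw [hpre]
      _ = P (S 0) := hmp.measure_preimage (hSmeas 0).nullMeasurableSet
  -- sum bound
  have hsum : P (S 0) ≤ ((V : ℝ≥0∞) + 1)⁻¹ := by
    rw [ENNReal.le_inv_iff_mul_le]
    have hU : P (⋃ j, S j) = ∑' j, P (S j) :=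
      measure_iUnion (fun j j' h => hdisj j j' h) hSmeas
    have heq : ∑' j : Fin (V + 1), P (S j) = P (S 0) * ((V : ℝ≥0∞) + 1) := by
      rw [tsum_fintype]
      simp_rw [hexch]
      rw [Finset.sum_const, card_univ, Fintype.card_fin, nsmul_eq_mul]
      push_cast
      ring
    calc P (S 0) * ((V : ℝ≥0∞) + 1) = P (⋃ j, S j) := by rw [hU, heq]
      _ ≤ 1 := prob_le_one
  -- the bad event in Ω
  set B : Set Ω := T ⁻¹' (S 0) with hB
  have hμB : μ B ≤ ((V : ℝ≥0∞) + 1)⁻¹ := by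
    rw [hB, ← Measure.map_apply_of_aemeasurable hTm (hSmeas 0), hmap]
    exact hsum
  -- the good event
  set G : Set Ω := {ω | ∃ v : Fin V,
      (N₀ : ℝ) / 2 ≤
        ((univ : Finset (Fin N)).filter fun i =>
          α i + X 0 ω i - X v.succ ω i ≤ 0).card} with hG
  have hBc : Bᶜ ⊆ G := by
    intro ω hω
    simp only [hB, Set.mem_compl_iff, Set.mem_preimage, hS, Set.mem_setOf_eq, hT] at hω
    push_neg at hω
    obtain ⟨k, hk0, hle⟩ := hω
    obtain ⟨v, rfl⟩ := Fin.eq_succ_of_ne_zero hk0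
    refine ⟨v, ?_⟩
    have hsub : mc α (X v.succ ω) (X 0 ω) ≤
        ((univ : Finset (Fin N)).filter fun i =>
          α i + X 0 ω i - X v.succ ω i ≤ 0).card := by
      refine card_le_card ?_
      intro i hi
      simp only [ExistsSampleAux.mc, mem_filter, mem_univ, true_and] at hi ⊢
      linarith [hi.1, hi.2]
    rw [div_le_iff₀ (by norm_num : (0:ℝ) < 2)]
    have : (N₀ : ℝ) ≤ 2 * mc α (X v.succ ω) (X 0 ω) := by
      exact_mod_cast hle
    have h2 : (mc α (X v.succ ω) (X 0 ω) : ℝ) ≤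
        ((univ : Finset (Fin N)).filter fun i =>
          α i + X 0 ω i - X v.succ ω i ≤ 0).card := by exact_mod_cast hsub
    linarith
  -- assemble
  have hone : (1 : ℝ≥0∞) ≤ μ G + μ B := by
    have : (Set.univ : Set Ω) ⊆ G ∪ B := by
      intro ω _
      rcases Classical.em (ω ∈ B) with h | h
      · exact Or.inr h
      · exact Or.inl (hBc h)
    calc (1 : ℝ≥0∞) = μ Set.univ := (measure_univ).symm
      _ ≤ μ (G ∪ B) := measure_mono this
      _ ≤ μ G + μ B := measure_union_le _ _
  have hkey : ENNReal.ofReal (1 - 2 / (V + 1)) + μ B ≤ 1 := by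
    have hinv : ((V : ℝ≥0∞) + 1)⁻¹ = ENNReal.ofReal (1 / (V + 1 : ℝ)) := by
      rw [one_div, ENNReal.ofReal_inv_of_pos (by positivity)]
      congr 1
      rw [ENNReal.ofReal_add (by positivity) zero_le_one]
      simp [ENNReal.ofReal_natCast]
    calc ENNReal.ofReal (1 - 2 / (V + 1)) + μ B
        ≤ ENNReal.ofReal (1 - 2 / (V + 1)) + ENNReal.ofReal (1 / (V + 1 : ℝ)) := by
          rw [← hinv]; exact add_le_add_right hμB _
      _ = ENNReal.ofReal (1 - 2 / (V + 1) + 1 / (V + 1 : ℝ)) := by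
          rw [ENNReal.ofReal_add hpos (by positivity)]
      _ ≤ ENNReal.ofReal 1 := by
          refine ENNReal.ofReal_le_ofReal ?_
          have h1 : (0 : ℝ) < V + 1 := by positivity
          have h2 : 0 ≤ 1 / (V + 1 : ℝ) := by positivity
          have : 1 - 2 / (V + 1 : ℝ) + 1 / (V + 1) = 1 - 1 / (V + 1) := by ring
          rw [this]; linarith
      _ = 1 := ENNReal.ofReal_one
  have := (ENNReal.add_le_add_iff_right (measure_ne_top μ B)).mp (hkey.trans hone)
  exact this
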